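/- Let (Y, y₀) be a pointed set and S an abelian monoid acting on Y by maps fixing y₀. For s ∈ S set X_s = { y ∈ Y : s·y = y₀ }, and for s, s′ = sr define ξ_{s,s′} : X_{sr} → X_s by y ↦ r·y; let X = lim← X_s be the inverse limit over the divisibility preorder on S, with projections ξ_u : X → X_u. Then for each s ∈ S there is a well-defined map β_s : X → X characterized by ξ_{su}(β_s(x)) = ξ_u(x) for all u ∈ S, and β_s is a bijection from X onto the subset X^{e_s} = { x ∈ X : ξ_s(x) = y₀ }, with inverse characterized by ξ_u(β_s^{−1}(x)) = ξ_{su}(x) for all u ∈ S, x ∈ X^{e_s}. -/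

import Mathlib

/-- The projective limit `X = lim← X_s` of the sets `X_s = {y : s·y = y₀}` along the
divisibility preorder of the abelian monoid `S`: an element is a family `(x_s)` with
`s·x_s = y₀` and `ξ_{s,sr}(x_{sr}) = r·x_{sr} = x_s`. -/
def EndoLimit {Y S : Type*} [CommMonoid S] (act : S →* Function.End Y) (y₀ : Y) : Type _ :=
  { x : S → Y // (∀ s : S, act s (x s) = y₀) ∧ ∀ s r : S, act r (x (s * r)) = x s }

/-- For a pointed set `(Y, y₀)` with an abelian monoid `S` acting by maps fixing `y₀`,
each `s ∈ S` induces a well-defined map `β_s : X → X`, characterized (uniquely) by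
`ξ_{su}(β_s(x)) = ξ_u(x)` for all `u`, which is a bijection of `X` onto the subset
`X^{e_s} = {x : ξ_s(x) = y₀}`, with inverse characterized by
`ξ_u(β_s⁻¹(x)) = ξ_{su}(x)`. -/
theorem endomotive_partial_iso {Y S : Type*} [CommMonoid S]
    (act : S →* Function.End Y) (y₀ : Y) (h0 : ∀ s : S, act s y₀ = y₀) (s : S) :
    ∃ β βinv : EndoLimit act y₀ → EndoLimit act y₀,
      (∀ (x : EndoLimit act y₀) (u : S), (β x).1 (s * u) = x.1 u) ∧
      (∀ β' : EndoLimit act y₀ → EndoLimit act y₀,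
        (∀ (x : EndoLimit act y₀) (u : S), (β' x).1 (s * u) = x.1 u) → β' = β) ∧
      (∀ x : EndoLimit act y₀, (β x).1 s = y₀) ∧
      (∀ x : EndoLimit act y₀, x.1 s = y₀ → ∀ u : S, (βinv x).1 u = x.1 (s * u)) ∧
      (∀ x : EndoLimit act y₀, βinv (β x) = x) ∧
      (∀ x : EndoLimit act y₀, x.1 s = y₀ → β (βinv x) = x) := by
  classical
  have actmul : ∀ (a b : S) (y : Y), act (a * b) y = act a (act b y) := by
    intro a b y
    rw [map_mul]
    rfl
  -- β
  refine ⟨fun x => ⟨fun v => act s (x.1 v), ?_, ?_⟩,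
    fun x => if h : x.1 s = y₀ then ⟨fun u => x.1 (s * u), ?_, ?_⟩ else x,
    ?_, ?_, ?_, ?_, ?_, ?_⟩
  · intro v
    have h1 : act s (x.1 (v * s)) = x.1 v := x.2.2 v s
    calc act v (act s (x.1 v)) = act v (act s (act s (x.1 (v * s)))) := by rw [h1]
      _ = act s (act (v * s) (x.1 (v * s))) := by
          rw [← actmul, ← actmul, ← actmul, mul_comm s (v * s)]
      _ = y₀ := by rw [x.2.1 (v * s), h0]
  · intro v r
    calc act r (act s (x.1 (v * r))) = act s (act r (x.1 (v * r))) := by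
          rw [← actmul, mul_comm r s, actmul]
      _ = act s (x.1 v) := by rw [x.2.2 v r]
  · intro u
    have := x.2.2 s u
    rwa [h] at this
  · intro u r
    have := x.2.2 (s * u) r
    rwa [mul_assoc] at this
  -- characterizing property of β
  · intro x u
    simp only
    have := x.2.2 u s
    rwa [mul_comm u s] at this
  -- uniqueness
  · intro β' hβ'
    funext x
    apply Subtype.ext
    funext v
    have h1 : (β' x).1 (s * v) = x.1 v := hβ' x v
    have h2 : act s ((β' x).1 (v * s)) = (β' x).1 v := (β' x).2.2 v s
    rw [mul_comm v s, h1] at h2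
    exact h2.symm
  -- (β x) s = y₀
  · intro x
    simp only
    have h1 : act s (x.1 (1 * s)) = x.1 1 := x.2.2 1 s
    rw [one_mul] at h1
    have h2 : x.1 1 = y₀ := by
      have := x.2.1 1
      rwa [map_one] at this
    rw [h1, h2]
  -- βinv characterization
  · intro x hx u
    exact (congrArg (fun z : EndoLimit act y₀ => z.1 u) (dif_pos hx)).trans rfl
  -- βinv ∘ β = id
  · intro x
    have hs : act s (x.1 s) = y₀ := by
      have h1 : act s (x.1 (1 * s)) = x.1 1 := x.2.2 1 s
      rw [one_mul] at h1
      have h2 : x.1 1 = y₀ := by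
        have := x.2.1 1
        rwa [map_one] at this
      rw [h1, h2]
    refine (dif_pos hs).trans ?_
    apply Subtype.ext
    funext u
    have := x.2.2 u s
    rwa [mul_comm u s] at this
  -- β ∘ βinv = id on X^{e_s}
  · intro x hx
    apply Subtype.ext
    funext v
    simp only
    refine (congrArg (fun z : EndoLimit act y₀ => act s (z.1 v)) (dif_pos hx)).trans ?_
    have := x.2.2 v s
    rwa [mul_comm v s] at this
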